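/- Fix n_A*, n_B* ∈ ℕ+, a dustbin score α ∈ ℝ, ε > 0, a fixed matrix S̄* ∈ ℝ^{(n_A*+1)×(n_B*+1)} whose last row and last column are constantly α, and probability vectors p_A, p_B on {1,…,n_A*} and {1,…,n_B*} with strictly positive entries; set K* = exp(S̄*/ε) entrywise. Let ρ : ℕ+ → {1,…,n_A*} and σ : ℕ+ → {1,…,n_B*} be fixed index maps with (1/n_A)·|{k ≤ n_A : ρ(k) = i*}| → p_A(i*) and (1/n_B)·|{l ≤ n_B : σ(l) = j*}| → p_B(j*) for all i*, j*. For each n_A, n_B, let S̄ ∈ ℝ^{(n_A+1)×(n_B+1)} be a random matrix whose last row and last column are constantly α, with S̄_{i,j} = S̄_{i',j'} almost surely whenever ρ(i)=ρ(i') and σ(j)=σ(j'), and S̄_{i,j} → S̄*_{ρ(i),σ(j)} in probability for each fixed (i,j) as n_A, n_B → ∞; set K = exp(S̄/ε). Let a ∈ ℝ^{n_A+1} have entries a_i = 1/n_A (i ≤ n_A), a_{n_A+1} = 1, let b ∈ ℝ^{n_B+1} have entries b_j = 1/n_B (j ≤ n_B), b_{n_B+1} = 1, and let a*, b* be the vectors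 with a*_{i*} = p_A(i*), a*_{n_A*+1} = 1, b*_{j*} = p_B(j*), b*_{n_B*+1} = 1. Run the Sinkhorn iteration initialized at u = a, v = b (respectively u* = a*, v* = b*), where each iteration updates u_i ← a_i/(Kv)_i and then v_j ← b_j/(Kᵀu)_j (respectively with K*, a*, b*). Then for every number L ∈ ℕ of iterations, the resulting vectors u^(L), v^(L) and u*^(L), v*^(L) satisfy: for each fixed i ≤ n_A, n_A·u^(L)_i → p_A(ρ(i))^{-1} u*^(L)_{ρ(i)} in probability; for each fixed j ≤ n_B, n_B·v^(L)_j → p_B(σ(j))^{-1} v*^(L)_{σ(j)} in probability; and u^(L)_{n_A+1} → u*^(L)_{n_A*+1} and v^(L)_{n_B+1} → v*^(L)_{n_B*+1} in probability, as n_A, n_B → ∞ jointly. -/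

import Mathlib

open MeasureTheory Filter Finset

noncomputable section

/-- `X` converges to `Y` in probability (w.r.t. the measure `P`) along the filter `l`. -/
def TendstoInProb {Ω : Type*} [MeasurableSpace Ω] (P : Measure Ω)
    {ι : Type*} (l : Filter ι) {E : Type*} [Dist E]
    (X : ι → Ω → E) (Y : Ω → E) : Prop :=
  ∀ ε : ℝ, 0 < ε → Tendsto (fun n => P {ω | ε < dist (X n ω) (Y ω)}) l (nhds 0)

/-- `L` Sinkhorn iterations for a kernel matrix with rows `0,…,nA` and columns `0,…,nB`
(the indices `nA` and `nB` playing the role of the dustbin row/column), marginals `a`, `b`,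
initialized at `u = a`, `v = b`; each iteration performs `uᵢ ← aᵢ/(Kv)ᵢ` and then
`vⱼ ← bⱼ/(Kᵀu)ⱼ` (with the updated `u`).  Matrices and vectors are modelled as functions
on `ℕ`; only the entries with index `≤ nA` (resp. `≤ nB`) are relevant. -/
def sinkhorn (nA nB : ℕ) (Km : ℕ → ℕ → ℝ) (a b : ℕ → ℝ) : ℕ → (ℕ → ℝ) × (ℕ → ℝ)
  | 0 => (a, b)
  | L + 1 =>
    let uv := sinkhorn nA nB Km a b L
    let u : ℕ → ℝ := fun i => a i / ∑ j ∈ Finset.range (nB + 1), Km i j * uv.2 j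
    let v : ℕ → ℝ := fun j => b j / ∑ i ∈ Finset.range (nA + 1), Km i j * u i
    (u, v)

/-- Uniform marginals with a unit dustbin entry: `aᵢ = 1/n` for `i < n`, and `1` otherwise
(in particular at the dustbin index `n`). -/
def uniformMarginal (n : ℕ) : ℕ → ℝ := fun i => if i < n then (n : ℝ)⁻¹ else 1

/-- Probability marginals with a unit dustbin entry: `aᵢ = p i` for `i < n`, and `1`
otherwise (in particular at the dustbin index `n`). -/
def probMarginal {n : ℕ} (p : Fin n → ℝ) : ℕ → ℝ := fun i =>
  if h : i < n then p ⟨i, h⟩ else 1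

/-- A matrix indexed by `Fin (m+1) × Fin (n+1)`, viewed as a function on `ℕ × ℕ`
(extended by `α`; only the entries with index `≤ m`, `≤ n` are relevant). -/
def extendByDustbin {m n : ℕ} (α : ℝ) (M : Fin (m + 1) → Fin (n + 1) → ℝ) : ℕ → ℕ → ℝ :=
  fun i j =>
    if h : i < m + 1 then (if h' : j < n + 1 then M ⟨i, h⟩ ⟨j, h'⟩ else α) else α


section AuxLemmas

variable {Ω : Type*} [MeasurableSpace Ω] {P : Measure Ω} {ι : Type*} {l : Filter ι}

/-- Convergence in probability to a constant. -/
def TIP (P : Measure Ω) (l : Filter ι) (X : ι → Ω → ℝ) (c : ℝ) : Prop :=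
  TendstoInProb P l X (fun _ => c)

theorem tip_const (c : ℝ) : TIP P l (fun _ _ => c) c := by
  intro e he
  have h0 : {ω : Ω | e < dist c c} = ∅ := by
    ext ω; simp [dist_self, not_lt_of_ge he.le]
  simp only [h0, measure_empty]
  exact tendsto_const_nhds

theorem tip_congr {X X' : ι → Ω → ℝ} {c : ℝ}
    (h : ∀ᶠ n in l, ∀ᵐ ω ∂P, X n ω = X' n ω) (hX : TIP P l X c) : TIP P l X' c := by
  intro e he
  have hle : ∀ᶠ n in l,
      P {ω | e < dist (X' n ω) c} ≤ P {ω | e < dist (X n ω) c} := by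
    filter_upwards [h] with n hn
    obtain ⟨N, hN0, hNsub⟩ :
        ∃ N : Set Ω, P N = 0 ∧ {ω | X n ω ≠ X' n ω} ⊆ N := by
      rcases (ae_iff.mp hn) with h0
      exact ⟨{ω | ¬ X n ω = X' n ω}, h0, fun ω hω => hω⟩
    calc P {ω | e < dist (X' n ω) c}
        ≤ P ({ω | e < dist (X n ω) c} ∪ N) := by
          apply measure_mono
          intro ω hω
          by_cases hXX : X n ω = X' n ω
          · left; simpa [hXX] using hω
          · right; exact hNsub hXX
      _ ≤ P {ω | e < dist (X n ω) c} + P N := measure_union_le _ _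
      _ = P {ω | e < dist (X n ω) c} := by rw [hN0, add_zero]
  exact tendsto_of_tendsto_of_tendsto_of_le_of_le' tendsto_const_nhds (hX e he)
    (Eventually.of_forall fun n => zero_le) hle

theorem tip_comp {X : ι → Ω → ℝ} {c : ℝ} {f : ℝ → ℝ}
    (hf : ContinuousAt f c) (hX : TIP P l X c) :
    TIP P l (fun n ω => f (X n ω)) (f c) := by
  intro e he
  obtain ⟨δ, hδ, hball⟩ := Metric.continuousAt_iff.mp hf e he
  have hle : ∀ᶠ n in l,
      P {ω | e < dist (f (X n ω)) (f c)} ≤ P {ω | δ/2 < dist (X n ω) c} := by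
    apply Eventually.of_forall
    intro n
    apply measure_mono
    intro ω hω
    simp only [Set.mem_setOf_eq] at hω ⊢
    by_contra hcon
    push_neg at hcon
    exact absurd (hball (lt_of_le_of_lt hcon (by linarith))) (not_lt_of_ge hω.le)
  exact tendsto_of_tendsto_of_tendsto_of_le_of_le' tendsto_const_nhds
    (hX (δ/2) (by linarith)) (Eventually.of_forall fun n => zero_le) hle

theorem tip_comp₂ {X Y : ι → Ω → ℝ} {c d : ℝ} {f : ℝ → ℝ → ℝ}
    (hf : ContinuousAt (fun p : ℝ × ℝ => f p.1 p.2) (c, d))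
    (hX : TIP P l X c) (hY : TIP P l Y d) :
    TIP P l (fun n ω => f (X n ω) (Y n ω)) (f c d) := by
  intro e he
  obtain ⟨δ, hδ, hball⟩ := Metric.continuousAt_iff.mp hf e he
  have hle : ∀ᶠ n in l,
      P {ω | e < dist (f (X n ω) (Y n ω)) (f c d)} ≤
        P {ω | δ/2 < dist (X n ω) c} + P {ω | δ/2 < dist (Y n ω) d} := by
    apply Eventually.of_forall
    intro n
    refine le_trans (measure_mono ?_) (measure_union_le _ _)
    intro ω hω
    simp only [Set.mem_setOf_eq, Set.mem_union] at hω ⊢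
    by_contra hcon
    push_neg at hcon
    have hdist : dist ((X n ω, Y n ω) : ℝ × ℝ) (c, d) < δ := by
      rw [Prod.dist_eq]
      exact lt_of_le_of_lt (max_le hcon.1 hcon.2) (by linarith)
    exact absurd (hball hdist) (not_lt_of_ge hω.le)
  have hsum : Tendsto (fun n => P {ω | δ/2 < dist (X n ω) c} +
      P {ω | δ/2 < dist (Y n ω) d}) l (nhds 0) := by
    have := Tendsto.add (hX (δ/2) (by linarith)) (hY (δ/2) (by linarith))
    simpa using this
  exact tendsto_of_tendsto_of_tendsto_of_le_of_le' tendsto_const_nhds hsum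
    (Eventually.of_forall fun n => zero_le) hle

theorem tip_add {X Y : ι → Ω → ℝ} {c d : ℝ} (hX : TIP P l X c) (hY : TIP P l Y d) :
    TIP P l (fun n ω => X n ω + Y n ω) (c + d) :=
  tip_comp₂ (by fun_prop) hX hY

theorem tip_mul {X Y : ι → Ω → ℝ} {c d : ℝ} (hX : TIP P l X c) (hY : TIP P l Y d) :
    TIP P l (fun n ω => X n ω * Y n ω) (c * d) :=
  tip_comp₂ (by fun_prop) hX hY

theorem tip_inv {X : ι → Ω → ℝ} {c : ℝ} (hc : c ≠ 0) (hX : TIP P l X c) :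
    TIP P l (fun n ω => (X n ω)⁻¹) c⁻¹ :=
  tip_comp (continuousAt_inv₀ hc) hX

theorem tip_of_tendsto {x : ι → ℝ} {c : ℝ} (hx : Tendsto x l (nhds c)) :
    TIP P l (fun n _ => x n) c := by
  intro e he
  have hev : ∀ᶠ n in l, P {ω | e < dist (x n) c} = 0 := by
    filter_upwards [hx (Metric.ball_mem_nhds c he)] with n hn
    have : {ω : Ω | e < dist (x n) c} = ∅ := by
      ext ω; simp only [Set.mem_setOf_eq, Set.mem_empty_iff_false, iff_false, not_lt]
      exact le_of_lt (by simpa [Metric.mem_ball] using hn)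
    simp [this]
  exact Tendsto.congr' (hev.mono fun n hn => hn.symm) tendsto_const_nhds

theorem tip_sum {γ : Type*} {s : Finset γ} {X : γ → ι → Ω → ℝ} {c : γ → ℝ}
    (h : ∀ g ∈ s, TIP P l (X g) (c g)) :
    TIP P l (fun n ω => ∑ g ∈ s, X g n ω) (∑ g ∈ s, c g) := by
  classical
  induction s using Finset.induction_on with
  | empty => simpa using tip_const (P := P) (l := l) 0
  | @insert a s' hg ih =>
    simp only [Finset.sum_insert hg]
    exact tip_add (h a (Finset.mem_insert_self a s'))
      (ih fun g hgs => h g (Finset.mem_insert_of_mem hgs))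

theorem sinkhorn_pos {nA nB : ℕ} {Km : ℕ → ℕ → ℝ} {a b : ℕ → ℝ}
    (hK : ∀ i j, 0 < Km i j) (ha : ∀ i, 0 < a i) (hb : ∀ j, 0 < b j) :
    ∀ L, (∀ i, 0 < (sinkhorn nA nB Km a b L).1 i) ∧
         (∀ j, 0 < (sinkhorn nA nB Km a b L).2 j) := by
  intro L
  induction L with
  | zero => exact ⟨ha, hb⟩
  | succ L ih =>
    have hu : ∀ i, 0 < (sinkhorn nA nB Km a b (L + 1)).1 i := by
      intro i
      show 0 < a i / ∑ j ∈ Finset.range (nB + 1), Km i j * (sinkhorn nA nB Km a b L).2 j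
      exact div_pos (ha i) (Finset.sum_pos
        (fun j _ => mul_pos (hK i j) (ih.2 j)) ⟨0, by simp⟩)
    refine ⟨hu, fun j => ?_⟩
    show 0 < b j / ∑ i ∈ Finset.range (nA + 1), Km i j * (sinkhorn nA nB Km a b (L + 1)).1 i
    exact div_pos (hb j) (Finset.sum_pos (fun i _ => mul_pos (hK i j) (hu i)) ⟨0, by simp⟩)

/-- Class-constancy of the Sinkhorn iterates, given class-constancy of the kernel. -/
theorem sinkhorn_grp {nA nB nAs nBs : ℕ} {Km : ℕ → ℕ → ℝ} {a b : ℕ → ℝ}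
    (ρ : ℕ → Fin nAs) (σ : ℕ → Fin nBs)
    (hKrow : ∀ i i' j, i < nA → i' < nA → j ≤ nB → ρ i = ρ i' → Km i j = Km i' j)
    (hKcol : ∀ i j j', i ≤ nA → j < nB → j' < nB → σ j = σ j' → Km i j = Km i j')
    (ha : ∀ i i', i < nA → i' < nA → ρ i = ρ i' → a i = a i')
    (hb : ∀ j j', j < nB → j' < nB → σ j = σ j' → b j = b j') :
    ∀ L, (∀ i i', i < nA → i' < nA → ρ i = ρ i' →
            (sinkhorn nA nB Km a b L).1 i = (sinkhorn nA nB Km a b L).1 i') ∧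
         (∀ j j', j < nB → j' < nB → σ j = σ j' →
            (sinkhorn nA nB Km a b L).2 j = (sinkhorn nA nB Km a b L).2 j') := by
  intro L
  induction L with
  | zero => exact ⟨ha, hb⟩
  | succ L ih =>
    have hu : ∀ i i', i < nA → i' < nA → ρ i = ρ i' →
        (sinkhorn nA nB Km a b (L + 1)).1 i = (sinkhorn nA nB Km a b (L + 1)).1 i' := by
      intro i i' hi hi' hρ
      show a i / ∑ j ∈ Finset.range (nB + 1), Km i j * (sinkhorn nA nB Km a b L).2 j
        = a i' / ∑ j ∈ Finset.range (nB + 1), Km i' j * (sinkhorn nA nB Km a b L).2 j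
      rw [ha i i' hi hi' hρ]
      congr 1
      refine Finset.sum_congr rfl fun j hj => ?_
      rw [hKrow i i' j hi hi' (Nat.lt_succ_iff.mp (Finset.mem_range.mp hj)) hρ]
    refine ⟨hu, fun j j' hj hj' hσ => ?_⟩
    show b j / ∑ i ∈ Finset.range (nA + 1), Km i j * (sinkhorn nA nB Km a b (L + 1)).1 i
      = b j' / ∑ i ∈ Finset.range (nA + 1), Km i j' * (sinkhorn nA nB Km a b (L + 1)).1 i
    rw [hb j j' hj hj' hσ]
    congr 1
    refine Finset.sum_congr rfl fun i hi => ?_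
    rw [hKcol i j j' (Nat.lt_succ_iff.mp (Finset.mem_range.mp hi)) hj hj' hσ]

/-- Grouping a class-constant sum into fibers. -/
theorem group_sum {n ns : ℕ} (τ : ℕ → Fin ns) (r : Fin ns → ℕ)
    (hr : ∀ t, τ (r t) = t) (hrlt : ∀ t, r t < n) {f : ℕ → ℝ}
    (hf : ∀ j j', j < n → j' < n → τ j = τ j' → f j = f j') :
    ∑ j ∈ Finset.range n, f j
      = ∑ t : Fin ns, (((Finset.range n).filter fun j => τ j = t).card : ℝ) * f (r t) := by
  classical
  rw [← Finset.sum_fiberwise_of_maps_to (g := τ) (t := Finset.univ)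
    (fun j _ => Finset.mem_univ (τ j))]
  refine Finset.sum_congr rfl fun t _ => ?_
  rw [Finset.sum_congr rfl (fun j hj => ?_), Finset.sum_const, nsmul_eq_mul]
  simp only [Finset.mem_filter, Finset.mem_range] at hj
  exact hf j (r t) hj.1 (hrlt t) (by rw [hj.2, hr t])

/-- The core asymptotic computation: a grouped random sum converges in probability. -/
theorem tip_groupedSum [IsProbabilityMeasure P]
    {ns : ℕ} (τ : ℕ → Fin ns) (q : Fin ns → ℝ) (hq : ∀ t, q t ≠ 0)
    (r : Fin ns → ℕ) (hr : ∀ t, τ (r t) = t)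
    (m : ι → ℕ) (hm : ∀ c : ℕ, ∀ᶠ n in l, c < m n)
    (hcard : ∀ t : Fin ns, Tendsto
      (fun n => (((Finset.range (m n)).filter fun j => τ j = t).card : ℝ) / (m n : ℝ))
      l (nhds (q t)))
    (g w : ι → Ω → ℕ → ℝ)
    (gstar : Fin ns → ℝ) (β : ℝ) (wstar : Fin ns → ℝ) (wd : ℝ)
    (hgconv : ∀ t, TIP P l (fun n ω => g n ω (r t)) (gstar t))
    (hgd : ∀ᶠ n in l, ∀ᵐ ω ∂P, g n ω (m n) = β)
    (hwconv : ∀ t, TIP P l (fun n ω => (m n : ℝ) * w n ω (r t)) ((q t)⁻¹ * wstar t))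
    (hwd : TIP P l (fun n ω => w n ω (m n)) wd)
    (hconst : ∀ᶠ n in l, ∀ᵐ ω ∂P, ∀ j j', j < m n → j' < m n → τ j = τ j' →
      g n ω j * w n ω j = g n ω j' * w n ω j') :
    TIP P l (fun n ω => ∑ j ∈ Finset.range (m n + 1), g n ω j * w n ω j)
      (∑ t : Fin ns, gstar t * wstar t + β * wd) := by
  classical
  have hT : TIP P l (fun n ω =>
      (∑ t : Fin ns, (((Finset.range (m n)).filter fun j => τ j = t).card : ℝ) / (m n : ℝ) *
        (g n ω (r t) * ((m n : ℝ) * w n ω (r t)))) + β * w n ω (m n))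
      (∑ t : Fin ns, q t * (gstar t * ((q t)⁻¹ * wstar t)) + β * wd) := by
    refine tip_add (tip_sum fun t _ => ?_) (tip_mul (tip_const β) hwd)
    exact tip_mul (tip_of_tendsto (hcard t)) (tip_mul (hgconv t) (hwconv t))
  have hlim : (∑ t : Fin ns, q t * (gstar t * ((q t)⁻¹ * wstar t)) + β * wd)
      = ∑ t : Fin ns, gstar t * wstar t + β * wd := by
    congr 1
    refine Finset.sum_congr rfl fun t _ => ?_
    field_simp
    rw [mul_assoc, mul_div_cancel_left₀ _ (hq t)]
  rw [hlim] at hT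
  refine tip_congr ?_ hT
  filter_upwards [hm (Finset.univ.sup r), hm 0, hgd, hconst] with n h1 h2 h3 h4
  filter_upwards [h3, h4] with ω hω3 hω4
  have hrlt : ∀ t, r t < m n := fun t =>
    lt_of_le_of_lt (Finset.le_sup (Finset.mem_univ t)) h1
  have hm0 : (m n : ℝ) ≠ 0 := Nat.cast_ne_zero.mpr h2.ne'
  rw [Finset.sum_range_succ, group_sum τ r hr hrlt hω4, hω3]
  congr 1
  refine Finset.sum_congr rfl fun t _ => ?_
  field_simp

end AuxLemmas

def skr (ε : ℝ) {Ω : Type*} (S : ℕ → ℕ → Ω → ℕ → ℕ → ℝ) (p : ℕ × ℕ) (ω : Ω) :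
    ℕ → (ℕ → ℝ) × (ℕ → ℝ) :=
  sinkhorn p.1 p.2 (fun i j => Real.exp (S p.1 p.2 ω i j / ε))
    (uniformMarginal p.1) (uniformMarginal p.2)

def sks {nAs nBs : ℕ} (α ε : ℝ) (Sstar : Fin (nAs + 1) → Fin (nBs + 1) → ℝ)
    (pA : Fin nAs → ℝ) (pB : Fin nBs → ℝ) : ℕ → (ℕ → ℝ) × (ℕ → ℝ) :=
  sinkhorn nAs nBs (fun i j => Real.exp (extendByDustbin α Sstar i j / ε))
    (probMarginal pA) (probMarginal pB)

theorem skr_fst_succ (ε : ℝ) {Ω : Type*} (S : ℕ → ℕ → Ω → ℕ → ℕ → ℝ) (p : ℕ × ℕ) (ω : Ω)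
    (L : ℕ) (i : ℕ) :
    (skr ε S p ω (L + 1)).1 i = uniformMarginal p.1 i /
      ∑ j ∈ Finset.range (p.2 + 1), Real.exp (S p.1 p.2 ω i j / ε) * (skr ε S p ω L).2 j :=
  rfl

theorem skr_snd_succ (ε : ℝ) {Ω : Type*} (S : ℕ → ℕ → Ω → ℕ → ℕ → ℝ) (p : ℕ × ℕ) (ω : Ω)
    (L : ℕ) (j : ℕ) :
    (skr ε S p ω (L + 1)).2 j = uniformMarginal p.2 j /
      ∑ i ∈ Finset.range (p.1 + 1), Real.exp (S p.1 p.2 ω i j / ε) * (skr ε S p ω (L + 1)).1 i :=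
  rfl

theorem sks_fst_succ {nAs nBs : ℕ} (α ε : ℝ) (Sstar : Fin (nAs + 1) → Fin (nBs + 1) → ℝ)
    (pA : Fin nAs → ℝ) (pB : Fin nBs → ℝ) (L : ℕ) (x : ℕ) :
    (sks α ε Sstar pA pB (L + 1)).1 x = probMarginal pA x /
      ∑ j ∈ Finset.range (nBs + 1),
        Real.exp (extendByDustbin α Sstar x j / ε) * (sks α ε Sstar pA pB L).2 j :=
  rfl

theorem sks_snd_succ {nAs nBs : ℕ} (α ε : ℝ) (Sstar : Fin (nAs + 1) → Fin (nBs + 1) → ℝ)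
    (pA : Fin nAs → ℝ) (pB : Fin nBs → ℝ) (L : ℕ) (y : ℕ) :
    (sks α ε Sstar pA pB (L + 1)).2 y = probMarginal pB y /
      ∑ i ∈ Finset.range (nAs + 1),
        Real.exp (extendByDustbin α Sstar i y / ε) * (sks α ε Sstar pA pB (L + 1)).1 i :=
  rfl

theorem extend_eq {m n : ℕ} (α : ℝ) (M : Fin (m + 1) → Fin (n + 1) → ℝ) (i : Fin m)
    (j : Fin n) : extendByDustbin α M ↑i ↑j = M i.castSucc j.castSucc := by
  unfold extendByDustbin
  rw [dif_pos (Nat.lt_succ_of_lt i.isLt), dif_pos (Nat.lt_succ_of_lt j.isLt)]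
  congr 1 <;> exact Fin.ext (by simp)


/-- every number `L` of Sinkhorn iterations on the sampled problem (uniform
marginals) tracks, asymptotically in probability, the corresponding iterations on the fixed
reweighted problem (probability marginals). -/
theorem sinkhorn_iterations_asymptotic
    {Ω : Type*} [MeasurableSpace Ω] (P : Measure Ω) [IsProbabilityMeasure P]
    (nAs nBs : ℕ) (hnAs : 0 < nAs) (hnBs : 0 < nBs)
    (α : ℝ) (ε : ℝ) (hε : 0 < ε)
    (Sstar : Fin (nAs + 1) → Fin (nBs + 1) → ℝ)
    (hSstar_row : ∀ j, Sstar (Fin.last nAs) j = α)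
    (hSstar_col : ∀ i, Sstar i (Fin.last nBs) = α)
    (pA : Fin nAs → ℝ) (pB : Fin nBs → ℝ)
    (hpA_pos : ∀ i, 0 < pA i) (hpA_sum : ∑ i, pA i = 1)
    (hpB_pos : ∀ j, 0 < pB j) (hpB_sum : ∑ j, pB j = 1)
    (ρ : ℕ → Fin nAs) (σ : ℕ → Fin nBs)
    (hρ_card : ∀ istar : Fin nAs,
      Tendsto (fun nA : ℕ => (((Finset.range nA).filter fun k => ρ k = istar).card : ℝ) / (nA : ℝ))
        atTop (nhds (pA istar)))
    (hσ_card : ∀ jstar : Fin nBs,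
      Tendsto (fun nB : ℕ => (((Finset.range nB).filter fun l => σ l = jstar).card : ℝ) / (nB : ℝ))
        atTop (nhds (pB jstar)))
    -- the random augmented score matrices `S nA nB ω : ℕ → ℕ → ℝ`
    -- (rows `0,…,nA`, columns `0,…,nB`, last index = dustbin)
    (S : ℕ → ℕ → Ω → ℕ → ℕ → ℝ)
    (hS_row : ∀ nA nB ω j, j ≤ nB → S nA nB ω nA j = α)
    (hS_col : ∀ nA nB ω i, i ≤ nA → S nA nB ω i nB = α)
    (hS_grp : ∀ nA nB : ℕ, ∀ᵐ ω ∂P, ∀ i i' j j' : ℕ,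
      i < nA → i' < nA → j < nB → j' < nB → ρ i = ρ i' → σ j = σ j' →
      S nA nB ω i j = S nA nB ω i' j')
    (hS_conv : ∀ i j : ℕ,
      TendstoInProb P (atTop : Filter (ℕ × ℕ))
        (fun nAB ω => S nAB.1 nAB.2 ω i j)
        (fun _ => Sstar (ρ i).castSucc (σ j).castSucc)) :
    ∀ L : ℕ,
      (∀ i : ℕ,
        TendstoInProb P (atTop : Filter (ℕ × ℕ))
          (fun nAB ω => (nAB.1 : ℝ) *
            (sinkhorn nAB.1 nAB.2 (fun i' j' => Real.exp (S nAB.1 nAB.2 ω i' j' / ε))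
              (uniformMarginal nAB.1) (uniformMarginal nAB.2) L).1 i)
          (fun _ => (pA (ρ i))⁻¹ *
            (sinkhorn nAs nBs (fun i' j' => Real.exp (extendByDustbin α Sstar i' j' / ε))
              (probMarginal pA) (probMarginal pB) L).1 (ρ i).castSucc)) ∧
      (∀ j : ℕ,
        TendstoInProb P (atTop : Filter (ℕ × ℕ))
          (fun nAB ω => (nAB.2 : ℝ) *
            (sinkhorn nAB.1 nAB.2 (fun i' j' => Real.exp (S nAB.1 nAB.2 ω i' j' / ε))
              (uniformMarginal nAB.1) (uniformMarginal nAB.2) L).2 j)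
          (fun _ => (pB (σ j))⁻¹ *
            (sinkhorn nAs nBs (fun i' j' => Real.exp (extendByDustbin α Sstar i' j' / ε))
              (probMarginal pA) (probMarginal pB) L).2 (σ j).castSucc)) ∧
      TendstoInProb P (atTop : Filter (ℕ × ℕ))
        (fun nAB ω =>
          (sinkhorn nAB.1 nAB.2 (fun i' j' => Real.exp (S nAB.1 nAB.2 ω i' j' / ε))
            (uniformMarginal nAB.1) (uniformMarginal nAB.2) L).1 nAB.1)
        (fun _ =>
          (sinkhorn nAs nBs (fun i' j' => Real.exp (extendByDustbin α Sstar i' j' / ε))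
            (probMarginal pA) (probMarginal pB) L).1 nAs) ∧
      TendstoInProb P (atTop : Filter (ℕ × ℕ))
        (fun nAB ω =>
          (sinkhorn nAB.1 nAB.2 (fun i' j' => Real.exp (S nAB.1 nAB.2 ω i' j' / ε))
            (uniformMarginal nAB.1) (uniformMarginal nAB.2) L).2 nAB.2)
        (fun _ =>
          (sinkhorn nAs nBs (fun i' j' => Real.exp (extendByDustbin α Sstar i' j' / ε))
            (probMarginal pA) (probMarginal pB) L).2 nBs) := by
  classical
  have hexp : ∀ x : ℝ, ContinuousAt (fun y : ℝ => Real.exp (y / ε)) x := fun x =>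
    (Real.continuous_exp.comp (continuous_id.div_const ε)).continuousAt
  have hfst : ∀ c : ℕ, ∀ᶠ p : ℕ × ℕ in atTop, c < p.1 := by
    intro c
    rw [← prod_atTop_atTop_eq]
    exact Eventually.prod_inl (eventually_gt_atTop c) _
  have hsnd : ∀ c : ℕ, ∀ᶠ p : ℕ × ℕ in atTop, c < p.2 := by
    intro c
    rw [← prod_atTop_atTop_eq]
    exact Eventually.prod_inr (eventually_gt_atTop c) _
  have htfst : Tendsto (fun p : ℕ × ℕ => p.1) atTop atTop := by
    rw [← prod_atTop_atTop_eq]; exact tendsto_fst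
  have htsnd : Tendsto (fun p : ℕ × ℕ => p.2) atTop atTop := by
    rw [← prod_atTop_atTop_eq]; exact tendsto_snd
  obtain ⟨rA, hrA⟩ : ∃ rA : Fin nAs → ℕ, ∀ t, ρ (rA t) = t := by
    have hex : ∀ t : Fin nAs, ∃ k, ρ k = t := by
      intro t
      by_contra hcon
      push_neg at hcon
      have h1 := hρ_card t
      have h0 : (fun nA : ℕ => ((((Finset.range nA).filter fun k => ρ k = t).card : ℝ) / nA))
          = fun _ : ℕ => (0 : ℝ) := by
        funext nA
        rw [Finset.filter_false_of_mem fun k _ => hcon k]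
        simp
      rw [h0] at h1
      exact (hpA_pos t).ne' (tendsto_nhds_unique h1 tendsto_const_nhds)
    exact ⟨fun t => (hex t).choose, fun t => (hex t).choose_spec⟩
  obtain ⟨rB, hrB⟩ : ∃ rB : Fin nBs → ℕ, ∀ t, σ (rB t) = t := by
    have hex : ∀ t : Fin nBs, ∃ k, σ k = t := by
      intro t
      by_contra hcon
      push_neg at hcon
      have h1 := hσ_card t
      have h0 : (fun nB : ℕ => ((((Finset.range nB).filter fun l => σ l = t).card : ℝ) / nB))
          = fun _ : ℕ => (0 : ℝ) := by
        funext nB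
        rw [Finset.filter_false_of_mem fun l _ => hcon l]
        simp
      rw [h0] at h1
      exact (hpB_pos t).ne' (tendsto_nhds_unique h1 tendsto_const_nhds)
    exact ⟨fun t => (hex t).choose, fun t => (hex t).choose_spec⟩
  have haPos : ∀ i, 0 < probMarginal pA i := by
    intro i; unfold probMarginal; split
    · exact hpA_pos _
    · exact one_pos
  have hbPos : ∀ j, 0 < probMarginal pB j := by
    intro j; unfold probMarginal; split
    · exact hpB_pos _
    · exact one_pos
  have hstarpos : ∀ M, (∀ i, 0 < (sks α ε Sstar pA pB M).1 i) ∧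
      (∀ j, 0 < (sks α ε Sstar pA pB M).2 j) :=
    sinkhorn_pos (fun i j => Real.exp_pos _) haPos hbPos
  have hgrp : ∀ p : ℕ × ℕ, ∀ᵐ ω ∂P, ∀ M : ℕ,
      (∀ i i', i < p.1 → i' < p.1 → ρ i = ρ i' →
        (skr ε S p ω M).1 i = (skr ε S p ω M).1 i') ∧
      (∀ j j', j < p.2 → j' < p.2 → σ j = σ j' →
        (skr ε S p ω M).2 j = (skr ε S p ω M).2 j') := by
    intro p
    filter_upwards [hS_grp p.1 p.2] with ω hω
    refine sinkhorn_grp ρ σ ?_ ?_ ?_ ?_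
    · intro i i' j hi hi' hj hρρ
      show Real.exp (S p.1 p.2 ω i j / ε) = Real.exp (S p.1 p.2 ω i' j / ε)
      rcases lt_or_eq_of_le hj with hj | hj
      · rw [hω i i' j j hi hi' hj hj hρρ rfl]
      · subst hj
        rw [hS_col p.1 p.2 ω i hi.le, hS_col p.1 p.2 ω i' hi'.le]
    · intro i j j' hi hj hj' hσσ
      show Real.exp (S p.1 p.2 ω i j / ε) = Real.exp (S p.1 p.2 ω i j' / ε)
      rcases lt_or_eq_of_le hi with hi | hi
      · rw [hω i i j j' hi hi hj hj' rfl hσσ]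
      · subst hi
        rw [hS_row p.1 p.2 ω j hj.le, hS_row p.1 p.2 ω j' hj'.le]
    · intro i i' hi hi' _
      simp [uniformMarginal, hi, hi']
    · intro j j' hj hj' _
      simp [uniformMarginal, hj, hj']
  have hKrow0 : ∀ j : ℕ, extendByDustbin α Sstar nAs j = α := by
    intro j
    unfold extendByDustbin
    rw [dif_pos (Nat.lt_succ_self nAs)]
    split
    · exact hSstar_row _
    · rfl
  have hKcol0 : ∀ x : ℕ, extendByDustbin α Sstar x nBs = α := by
    intro x
    unfold extendByDustbin
    split
    · rw [dif_pos (Nat.lt_succ_self nBs)]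
      exact hSstar_col _
    · rfl
  have hDstar : ∀ x M : ℕ, 0 < ∑ j ∈ Finset.range (nBs + 1),
      Real.exp (extendByDustbin α Sstar x j / ε) * (sks α ε Sstar pA pB M).2 j :=
    fun x M => Finset.sum_pos (fun j _ => mul_pos (Real.exp_pos _) ((hstarpos M).2 j))
      ⟨0, Finset.mem_range.mpr (Nat.succ_pos _)⟩
  have hEstar : ∀ y M : ℕ, 0 < ∑ i ∈ Finset.range (nAs + 1),
      Real.exp (extendByDustbin α Sstar i y / ε) * (sks α ε Sstar pA pB M).1 i :=
    fun y M => Finset.sum_pos (fun i _ => mul_pos (Real.exp_pos _) ((hstarpos M).1 i))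
      ⟨0, Finset.mem_range.mpr (Nat.succ_pos _)⟩
  have hDrow_eq : ∀ x M : ℕ,
      (∑ t : Fin nBs,
        Real.exp (extendByDustbin α Sstar x ↑t / ε) * (sks α ε Sstar pA pB M).2 ↑t)
        + Real.exp (α / ε) * (sks α ε Sstar pA pB M).2 nBs
      = ∑ j ∈ Finset.range (nBs + 1),
          Real.exp (extendByDustbin α Sstar x j / ε) * (sks α ε Sstar pA pB M).2 j := by
    intro x M
    rw [Finset.sum_range_succ, hKcol0 x, ← Fin.sum_univ_eq_sum_range]
  have hEcol_eq : ∀ y M : ℕ,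
      (∑ t : Fin nAs,
        Real.exp (extendByDustbin α Sstar ↑t y / ε) * (sks α ε Sstar pA pB M).1 ↑t)
        + Real.exp (α / ε) * (sks α ε Sstar pA pB M).1 nAs
      = ∑ i ∈ Finset.range (nAs + 1),
          Real.exp (extendByDustbin α Sstar i y / ε) * (sks α ε Sstar pA pB M).1 i := by
    intro y M
    rw [Finset.sum_range_succ, hKrow0 y, ← Fin.sum_univ_eq_sum_range]
  have hkey : ∀ c d : ℝ, c ≠ 0 → d⁻¹ = c⁻¹ * (c / d) := fun c d hc => by
    rw [div_eq_mul_inv, ← mul_assoc, inv_mul_cancel₀ hc, one_mul]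
  have hkey2 : ∀ (n : ℕ) (d : ℝ), 0 < n → d⁻¹ = (n : ℝ) * ((n : ℝ)⁻¹ / d) := fun n d hn => by
    rw [div_eq_mul_inv, ← mul_assoc, mul_inv_cancel₀ (Nat.cast_ne_zero.mpr hn.ne'), one_mul]
  suffices H : ∀ L : ℕ,
      (∀ i : ℕ, TIP P atTop (fun p : ℕ × ℕ => fun ω => (p.1 : ℝ) * (skr ε S p ω L).1 i)
        ((pA (ρ i))⁻¹ * (sks α ε Sstar pA pB L).1 ↑(ρ i))) ∧
      (∀ j : ℕ, TIP P atTop (fun p : ℕ × ℕ => fun ω => (p.2 : ℝ) * (skr ε S p ω L).2 j)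
        ((pB (σ j))⁻¹ * (sks α ε Sstar pA pB L).2 ↑(σ j))) ∧
      TIP P atTop (fun p : ℕ × ℕ => fun ω => (skr ε S p ω L).1 p.1)
        ((sks α ε Sstar pA pB L).1 nAs) ∧
      TIP P atTop (fun p : ℕ × ℕ => fun ω => (skr ε S p ω L).2 p.2)
        ((sks α ε Sstar pA pB L).2 nBs) by
    exact H
  intro L
  induction L with
  | zero =>
    refine ⟨fun i => ?_, fun j => ?_, ?_, ?_⟩
    · rw [show (pA (ρ i))⁻¹ * (sks α ε Sstar pA pB 0).1 ↑(ρ i) = 1 by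
        show (pA (ρ i))⁻¹ * probMarginal pA ↑(ρ i) = 1
        rw [show probMarginal pA ↑(ρ i) = pA (ρ i) by simp [probMarginal, (ρ i).isLt]]
        exact inv_mul_cancel₀ (hpA_pos (ρ i)).ne']
      refine tip_congr ?_ (tip_const 1)
      filter_upwards [hfst i] with p hp
      refine Eventually.of_forall fun ω => ?_
      show (1 : ℝ) = (p.1 : ℝ) * uniformMarginal p.1 i
      rw [show uniformMarginal p.1 i = ((p.1 : ℕ) : ℝ)⁻¹ by simp [uniformMarginal, hp]]
      exact (mul_inv_cancel₀
        (Nat.cast_ne_zero.mpr (Nat.lt_of_le_of_lt (Nat.zero_le i) hp).ne')).symm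
    · rw [show (pB (σ j))⁻¹ * (sks α ε Sstar pA pB 0).2 ↑(σ j) = 1 by
        show (pB (σ j))⁻¹ * probMarginal pB ↑(σ j) = 1
        rw [show probMarginal pB ↑(σ j) = pB (σ j) by simp [probMarginal, (σ j).isLt]]
        exact inv_mul_cancel₀ (hpB_pos (σ j)).ne']
      refine tip_congr ?_ (tip_const 1)
      filter_upwards [hsnd j] with p hp
      refine Eventually.of_forall fun ω => ?_
      show (1 : ℝ) = (p.2 : ℝ) * uniformMarginal p.2 j
      rw [show uniformMarginal p.2 j = ((p.2 : ℕ) : ℝ)⁻¹ by simp [uniformMarginal, hp]]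
      exact (mul_inv_cancel₀
        (Nat.cast_ne_zero.mpr (Nat.lt_of_le_of_lt (Nat.zero_le j) hp).ne')).symm
    · rw [show (sks α ε Sstar pA pB 0).1 nAs = 1 by
        show probMarginal pA nAs = 1
        simp [probMarginal]]
      refine tip_congr ?_ (tip_const 1)
      refine Eventually.of_forall fun p => Eventually.of_forall fun ω => ?_
      show (1 : ℝ) = uniformMarginal p.1 p.1
      simp [uniformMarginal]
    · rw [show (sks α ε Sstar pA pB 0).2 nBs = 1 by
        show probMarginal pB nBs = 1
        simp [probMarginal]]
      refine tip_congr ?_ (tip_const 1)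
      refine Eventually.of_forall fun p => Eventually.of_forall fun ω => ?_
      show (1 : ℝ) = uniformMarginal p.2 p.2
      simp [uniformMarginal]
  | succ L ih =>
    obtain ⟨ihu, ihv, ihud, ihvd⟩ := ih
    -- reusable convergence of the grouped v-entries
    have hwconvB : ∀ t : Fin nBs, TIP P atTop
        (fun p : ℕ × ℕ => fun ω => ((p.2 : ℕ) : ℝ) * (skr ε S p ω L).2 (rB t))
        ((pB t)⁻¹ * (sks α ε Sstar pA pB L).2 ↑t) := by
      intro t
      have h1 := ihv (rB t)
      rwa [hrB t] at h1
    -- denominator convergence, fixed row i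
    have hDi : ∀ i : ℕ, TIP P atTop
        (fun p : ℕ × ℕ => fun ω => ∑ j ∈ Finset.range (p.2 + 1),
          Real.exp (S p.1 p.2 ω i j / ε) * (skr ε S p ω L).2 j)
        (∑ j ∈ Finset.range (nBs + 1),
          Real.exp (extendByDustbin α Sstar ↑(ρ i) j / ε) * (sks α ε Sstar pA pB L).2 j) := by
      intro i
      have hgconv : ∀ t : Fin nBs, TIP P atTop
          (fun p : ℕ × ℕ => fun ω => Real.exp (S p.1 p.2 ω i (rB t) / ε))
          (Real.exp (extendByDustbin α Sstar ↑(ρ i) ↑t / ε)) := by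
        intro t
        have h1 : TIP P atTop
            (fun p : ℕ × ℕ => fun ω => Real.exp (S p.1 p.2 ω i (rB t) / ε))
            (Real.exp (Sstar (ρ i).castSucc (σ (rB t)).castSucc / ε)) :=
          tip_comp (f := fun y => Real.exp (y / ε)) (hexp _) (hS_conv i (rB t))
        rwa [hrB t, ← extend_eq α Sstar (ρ i) t] at h1
      have hgd : ∀ᶠ p : ℕ × ℕ in atTop, ∀ᵐ ω ∂P,
          Real.exp (S p.1 p.2 ω i p.2 / ε) = Real.exp (α / ε) := by
        filter_upwards [hfst i] with p hp
        exact Eventually.of_forall fun ω => by rw [hS_col p.1 p.2 ω i hp.le]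
      have hconst : ∀ᶠ p : ℕ × ℕ in atTop, ∀ᵐ ω ∂P,
          ∀ j j', j < p.2 → j' < p.2 → σ j = σ j' →
          Real.exp (S p.1 p.2 ω i j / ε) * (skr ε S p ω L).2 j
            = Real.exp (S p.1 p.2 ω i j' / ε) * (skr ε S p ω L).2 j' := by
        filter_upwards [hfst i] with p hp
        filter_upwards [hS_grp p.1 p.2, hgrp p] with ω hω1 hω2
        intro j j' hj hj' hσσ
        rw [hω1 i i j j' hp hp hj hj' rfl hσσ, (hω2 L).2 j j' hj hj' hσσ]
      have hg := tip_groupedSum σ pB (fun t => (hpB_pos t).ne') rB hrB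
        (fun p : ℕ × ℕ => p.2) hsnd (fun t => (hσ_card t).comp htsnd)
        (fun p ω j => Real.exp (S p.1 p.2 ω i j / ε))
        (fun p ω j => (skr ε S p ω L).2 j)
        (fun t => Real.exp (extendByDustbin α Sstar ↑(ρ i) ↑t / ε))
        (Real.exp (α / ε))
        (fun t => (sks α ε Sstar pA pB L).2 ↑t)
        ((sks α ε Sstar pA pB L).2 nBs)
        hgconv hgd hwconvB ihvd hconst
      rwa [hDrow_eq ↑(ρ i) L] at hg
    -- denominator convergence, dustbin row
    have hDd : TIP P atTop
        (fun p : ℕ × ℕ => fun ω => ∑ j ∈ Finset.range (p.2 + 1),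
          Real.exp (S p.1 p.2 ω p.1 j / ε) * (skr ε S p ω L).2 j)
        (∑ j ∈ Finset.range (nBs + 1),
          Real.exp (extendByDustbin α Sstar nAs j / ε) * (sks α ε Sstar pA pB L).2 j) := by
      have hgconv : ∀ t : Fin nBs, TIP P atTop
          (fun p : ℕ × ℕ => fun ω => Real.exp (S p.1 p.2 ω p.1 (rB t) / ε))
          (Real.exp (α / ε)) := by
        intro t
        refine tip_congr ?_ (tip_const (Real.exp (α / ε)))
        filter_upwards [hsnd (rB t)] with p hp
        exact Eventually.of_forall fun ω => by rw [hS_row p.1 p.2 ω (rB t) hp.le]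
      have hgd : ∀ᶠ p : ℕ × ℕ in atTop, ∀ᵐ ω ∂P,
          Real.exp (S p.1 p.2 ω p.1 p.2 / ε) = Real.exp (α / ε) := by
        refine Eventually.of_forall fun p => Eventually.of_forall fun ω => ?_
        rw [hS_row p.1 p.2 ω p.2 le_rfl]
      have hconst : ∀ᶠ p : ℕ × ℕ in atTop, ∀ᵐ ω ∂P,
          ∀ j j', j < p.2 → j' < p.2 → σ j = σ j' →
          Real.exp (S p.1 p.2 ω p.1 j / ε) * (skr ε S p ω L).2 j
            = Real.exp (S p.1 p.2 ω p.1 j' / ε) * (skr ε S p ω L).2 j' := by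
        refine Eventually.of_forall fun p => ?_
        filter_upwards [hgrp p] with ω hω2
        intro j j' hj hj' hσσ
        rw [hS_row p.1 p.2 ω j hj.le, hS_row p.1 p.2 ω j' hj'.le,
          (hω2 L).2 j j' hj hj' hσσ]
      have hg := tip_groupedSum σ pB (fun t => (hpB_pos t).ne') rB hrB
        (fun p : ℕ × ℕ => p.2) hsnd (fun t => (hσ_card t).comp htsnd)
        (fun p ω j => Real.exp (S p.1 p.2 ω p.1 j / ε))
        (fun p ω j => (skr ε S p ω L).2 j)
        (fun _ => Real.exp (α / ε))
        (Real.exp (α / ε))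
        (fun t => (sks α ε Sstar pA pB L).2 ↑t)
        ((sks α ε Sstar pA pB L).2 nBs)
        hgconv hgd hwconvB ihvd hconst
      have hlim2 : (∑ t : Fin nBs, Real.exp (α / ε) * (sks α ε Sstar pA pB L).2 ↑t)
          + Real.exp (α / ε) * (sks α ε Sstar pA pB L).2 nBs
          = ∑ j ∈ Finset.range (nBs + 1),
            Real.exp (extendByDustbin α Sstar nAs j / ε) * (sks α ε Sstar pA pB L).2 j := by
        rw [← hDrow_eq nAs L]
        congr 1
        exact Finset.sum_congr rfl fun t _ => by rw [hKrow0 ↑t]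
      rwa [hlim2] at hg
    -- the new u, fixed index
    have hstep_u : ∀ i : ℕ, TIP P atTop
        (fun p : ℕ × ℕ => fun ω => (p.1 : ℝ) * (skr ε S p ω (L + 1)).1 i)
        ((pA (ρ i))⁻¹ * (sks α ε Sstar pA pB (L + 1)).1 ↑(ρ i)) := by
      intro i
      have hinv := tip_inv (hDstar ↑(ρ i) L).ne' (hDi i)
      rw [show (pA (ρ i))⁻¹ * (sks α ε Sstar pA pB (L + 1)).1 ↑(ρ i)
          = (∑ j ∈ Finset.range (nBs + 1),
            Real.exp (extendByDustbin α Sstar ↑(ρ i) j / ε) * (sks α ε Sstar pA pB L).2 j)⁻¹ by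
        rw [sks_fst_succ,
          show probMarginal pA ↑(ρ i) = pA (ρ i) by simp [probMarginal, (ρ i).isLt]]
        exact (hkey _ _ (hpA_pos (ρ i)).ne').symm]
      refine tip_congr ?_ hinv
      filter_upwards [hfst i] with p hp
      refine Eventually.of_forall fun ω => ?_
      show (∑ j ∈ Finset.range (p.2 + 1),
          Real.exp (S p.1 p.2 ω i j / ε) * (skr ε S p ω L).2 j)⁻¹
        = (p.1 : ℝ) * (skr ε S p ω (L + 1)).1 i
      rw [skr_fst_succ,
        show uniformMarginal p.1 i = ((p.1 : ℕ) : ℝ)⁻¹ by simp [uniformMarginal, hp]]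
      exact hkey2 p.1 _ (Nat.lt_of_le_of_lt (Nat.zero_le i) hp)
    -- the new u, dustbin index
    have hstep_ud : TIP P atTop
        (fun p : ℕ × ℕ => fun ω => (skr ε S p ω (L + 1)).1 p.1)
        ((sks α ε Sstar pA pB (L + 1)).1 nAs) := by
      have hinv := tip_inv (hDstar nAs L).ne' hDd
      rw [show (sks α ε Sstar pA pB (L + 1)).1 nAs
          = (∑ j ∈ Finset.range (nBs + 1),
            Real.exp (extendByDustbin α Sstar nAs j / ε) * (sks α ε Sstar pA pB L).2 j)⁻¹ by
        rw [sks_fst_succ, show probMarginal pA nAs = 1 by simp [probMarginal], one_div]]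
      refine tip_congr ?_ hinv
      refine Eventually.of_forall fun p => Eventually.of_forall fun ω => ?_
      show (∑ j ∈ Finset.range (p.2 + 1),
          Real.exp (S p.1 p.2 ω p.1 j / ε) * (skr ε S p ω L).2 j)⁻¹
        = (skr ε S p ω (L + 1)).1 p.1
      rw [skr_fst_succ, show uniformMarginal p.1 p.1 = 1 by simp [uniformMarginal], one_div]
    -- reusable convergence of the grouped (new) u-entries
    have hwconvA : ∀ t : Fin nAs, TIP P atTop
        (fun p : ℕ × ℕ => fun ω => ((p.1 : ℕ) : ℝ) * (skr ε S p ω (L + 1)).1 (rA t))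
        ((pA t)⁻¹ * (sks α ε Sstar pA pB (L + 1)).1 ↑t) := by
      intro t
      have h1 := hstep_u (rA t)
      rwa [hrA t] at h1
    -- denominator convergence for the v-update, fixed column j
    have hEj : ∀ j : ℕ, TIP P atTop
        (fun p : ℕ × ℕ => fun ω => ∑ i ∈ Finset.range (p.1 + 1),
          Real.exp (S p.1 p.2 ω i j / ε) * (skr ε S p ω (L + 1)).1 i)
        (∑ i ∈ Finset.range (nAs + 1),
          Real.exp (extendByDustbin α Sstar i ↑(σ j) / ε)
            * (sks α ε Sstar pA pB (L + 1)).1 i) := by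
      intro j
      have hgconv : ∀ t : Fin nAs, TIP P atTop
          (fun p : ℕ × ℕ => fun ω => Real.exp (S p.1 p.2 ω (rA t) j / ε))
          (Real.exp (extendByDustbin α Sstar ↑t ↑(σ j) / ε)) := by
        intro t
        have h1 : TIP P atTop
            (fun p : ℕ × ℕ => fun ω => Real.exp (S p.1 p.2 ω (rA t) j / ε))
            (Real.exp (Sstar (ρ (rA t)).castSucc (σ j).castSucc / ε)) :=
          tip_comp (f := fun y => Real.exp (y / ε)) (hexp _) (hS_conv (rA t) j)
        rwa [hrA t, ← extend_eq α Sstar t (σ j)] at h1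
      have hgd : ∀ᶠ p : ℕ × ℕ in atTop, ∀ᵐ ω ∂P,
          Real.exp (S p.1 p.2 ω p.1 j / ε) = Real.exp (α / ε) := by
        filter_upwards [hsnd j] with p hp
        exact Eventually.of_forall fun ω => by rw [hS_row p.1 p.2 ω j hp.le]
      have hconst : ∀ᶠ p : ℕ × ℕ in atTop, ∀ᵐ ω ∂P,
          ∀ i i', i < p.1 → i' < p.1 → ρ i = ρ i' →
          Real.exp (S p.1 p.2 ω i j / ε) * (skr ε S p ω (L + 1)).1 i
            = Real.exp (S p.1 p.2 ω i' j / ε) * (skr ε S p ω (L + 1)).1 i' := by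
        filter_upwards [hsnd j] with p hp
        filter_upwards [hS_grp p.1 p.2, hgrp p] with ω hω1 hω2
        intro i i' hi hi' hρρ
        rw [hω1 i i' j j hi hi' hp hp hρρ rfl, (hω2 (L + 1)).1 i i' hi hi' hρρ]
      have hg := tip_groupedSum ρ pA (fun t => (hpA_pos t).ne') rA hrA
        (fun p : ℕ × ℕ => p.1) hfst (fun t => (hρ_card t).comp htfst)
        (fun p ω i => Real.exp (S p.1 p.2 ω i j / ε))
        (fun p ω i => (skr ε S p ω (L + 1)).1 i)
        (fun t => Real.exp (extendByDustbin α Sstar ↑t ↑(σ j) / ε))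
        (Real.exp (α / ε))
        (fun t => (sks α ε Sstar pA pB (L + 1)).1 ↑t)
        ((sks α ε Sstar pA pB (L + 1)).1 nAs)
        hgconv hgd hwconvA hstep_ud hconst
      rwa [hEcol_eq ↑(σ j) (L + 1)] at hg
    -- denominator convergence for the v-update, dustbin column
    have hEd : TIP P atTop
        (fun p : ℕ × ℕ => fun ω => ∑ i ∈ Finset.range (p.1 + 1),
          Real.exp (S p.1 p.2 ω i p.2 / ε) * (skr ε S p ω (L + 1)).1 i)
        (∑ i ∈ Finset.range (nAs + 1),
          Real.exp (extendByDustbin α Sstar i nBs / ε)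
            * (sks α ε Sstar pA pB (L + 1)).1 i) := by
      have hgconv : ∀ t : Fin nAs, TIP P atTop
          (fun p : ℕ × ℕ => fun ω => Real.exp (S p.1 p.2 ω (rA t) p.2 / ε))
          (Real.exp (α / ε)) := by
        intro t
        refine tip_congr ?_ (tip_const (Real.exp (α / ε)))
        filter_upwards [hfst (rA t)] with p hp
        exact Eventually.of_forall fun ω => by rw [hS_col p.1 p.2 ω (rA t) hp.le]
      have hgd : ∀ᶠ p : ℕ × ℕ in atTop, ∀ᵐ ω ∂P,
          Real.exp (S p.1 p.2 ω p.1 p.2 / ε) = Real.exp (α / ε) := by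
        refine Eventually.of_forall fun p => Eventually.of_forall fun ω => ?_
        rw [hS_col p.1 p.2 ω p.1 le_rfl]
      have hconst : ∀ᶠ p : ℕ × ℕ in atTop, ∀ᵐ ω ∂P,
          ∀ i i', i < p.1 → i' < p.1 → ρ i = ρ i' →
          Real.exp (S p.1 p.2 ω i p.2 / ε) * (skr ε S p ω (L + 1)).1 i
            = Real.exp (S p.1 p.2 ω i' p.2 / ε) * (skr ε S p ω (L + 1)).1 i' := by
        refine Eventually.of_forall fun p => ?_
        filter_upwards [hgrp p] with ω hω2
        intro i i' hi hi' hρρ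
        rw [hS_col p.1 p.2 ω i hi.le, hS_col p.1 p.2 ω i' hi'.le,
          (hω2 (L + 1)).1 i i' hi hi' hρρ]
      have hg := tip_groupedSum ρ pA (fun t => (hpA_pos t).ne') rA hrA
        (fun p : ℕ × ℕ => p.1) hfst (fun t => (hρ_card t).comp htfst)
        (fun p ω i => Real.exp (S p.1 p.2 ω i p.2 / ε))
        (fun p ω i => (skr ε S p ω (L + 1)).1 i)
        (fun _ => Real.exp (α / ε))
        (Real.exp (α / ε))
        (fun t => (sks α ε Sstar pA pB (L + 1)).1 ↑t)
        ((sks α ε Sstar pA pB (L + 1)).1 nAs)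
        hgconv hgd hwconvA hstep_ud hconst
      have hlim2 : (∑ t : Fin nAs, Real.exp (α / ε) * (sks α ε Sstar pA pB (L + 1)).1 ↑t)
          + Real.exp (α / ε) * (sks α ε Sstar pA pB (L + 1)).1 nAs
          = ∑ i ∈ Finset.range (nAs + 1),
            Real.exp (extendByDustbin α Sstar i nBs / ε)
              * (sks α ε Sstar pA pB (L + 1)).1 i := by
        rw [← hEcol_eq nBs (L + 1)]
        congr 1
        exact Finset.sum_congr rfl fun t _ => by rw [hKcol0 ↑t]
      rwa [hlim2] at hg
    -- the new v, fixed index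
    have hstep_v : ∀ j : ℕ, TIP P atTop
        (fun p : ℕ × ℕ => fun ω => (p.2 : ℝ) * (skr ε S p ω (L + 1)).2 j)
        ((pB (σ j))⁻¹ * (sks α ε Sstar pA pB (L + 1)).2 ↑(σ j)) := by
      intro j
      have hinv := tip_inv (hEstar ↑(σ j) (L + 1)).ne' (hEj j)
      rw [show (pB (σ j))⁻¹ * (sks α ε Sstar pA pB (L + 1)).2 ↑(σ j)
          = (∑ i ∈ Finset.range (nAs + 1),
            Real.exp (extendByDustbin α Sstar i ↑(σ j) / ε)
              * (sks α ε Sstar pA pB (L + 1)).1 i)⁻¹ by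
        rw [sks_snd_succ,
          show probMarginal pB ↑(σ j) = pB (σ j) by simp [probMarginal, (σ j).isLt]]
        exact (hkey _ _ (hpB_pos (σ j)).ne').symm]
      refine tip_congr ?_ hinv
      filter_upwards [hsnd j] with p hp
      refine Eventually.of_forall fun ω => ?_
      show (∑ i ∈ Finset.range (p.1 + 1),
          Real.exp (S p.1 p.2 ω i j / ε) * (skr ε S p ω (L + 1)).1 i)⁻¹
        = (p.2 : ℝ) * (skr ε S p ω (L + 1)).2 j
      rw [skr_snd_succ,
        show uniformMarginal p.2 j = ((p.2 : ℕ) : ℝ)⁻¹ by simp [uniformMarginal, hp]]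
      exact hkey2 p.2 _ (Nat.lt_of_le_of_lt (Nat.zero_le j) hp)
    -- the new v, dustbin index
    have hstep_vd : TIP P atTop
        (fun p : ℕ × ℕ => fun ω => (skr ε S p ω (L + 1)).2 p.2)
        ((sks α ε Sstar pA pB (L + 1)).2 nBs) := by
      have hinv := tip_inv (hEstar nBs (L + 1)).ne' hEd
      rw [show (sks α ε Sstar pA pB (L + 1)).2 nBs
          = (∑ i ∈ Finset.range (nAs + 1),
            Real.exp (extendByDustbin α Sstar i nBs / ε)
              * (sks α ε Sstar pA pB (L + 1)).1 i)⁻¹ by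
        rw [sks_snd_succ, show probMarginal pB nBs = 1 by simp [probMarginal], one_div]]
      refine tip_congr ?_ hinv
      refine Eventually.of_forall fun p => Eventually.of_forall fun ω => ?_
      show (∑ i ∈ Finset.range (p.1 + 1),
          Real.exp (S p.1 p.2 ω i p.2 / ε) * (skr ε S p ω (L + 1)).1 i)⁻¹
        = (skr ε S p ω (L + 1)).2 p.2
      rw [skr_snd_succ, show uniformMarginal p.2 p.2 = 1 by simp [uniformMarginal], one_div]
    exact ⟨hstep_u, hstep_v, hstep_ud, hstep_vd⟩

end
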